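/- Let F be an algebraically closed field of characteristic zero, Γ an additive abelian group, ε a skew-symmetric bicharacter of Γ, and A a Γ-graded associative unital ε-commutative F-algebra. Let D be a finite-dimensional Γ-graded F-subspace of color derivations of A such that every homogeneous element of D is a homogeneous color derivation, D is ε-commutative (∂∘∂' = ε(∂̄,∂̄')·∂'∘∂ for all homogeneous ∂,∂' ∈ D), every element of D is locally finite on A, every eigenspace of every homogeneous element of D is a Γ-graded subspace of A, and A is graded D-simple. Let A(0)^{(m)} denote the generalized weight space of the zero weight (defined with respect to the set of homogeneous elements of D) and A(0) = ∪_{m∈ℕ} A(0)^{(m)}. Then A(0) is contained in (hence equal to) the unital F-subalgebra of A generated by A(0)^{(1)}. -/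

import Mathlib

set_option linter.unusedSectionVars false
set_option linter.unusedVariables false


/-- `d` is a homogeneous color derivation of degree `lam` of the `Γ`-graded algebra `A`
(with grading `𝒜`) relative to the bicharacter `ε`. -/
def IsHomColorDer {F : Type*} [Field F] {Γ : Type*} [AddCommGroup Γ]
    {A : Type*} [Ring A] [Algebra F A]
    (ε : Γ → Γ → F) (𝒜 : Γ → Submodule F A) (lam : Γ) (d : Module.End F A) : Prop :=
  (∀ μ : Γ, ∀ a ∈ 𝒜 μ, d a ∈ 𝒜 (lam + μ)) ∧
  (∀ (l m : Γ) (a b : A), a ∈ 𝒜 l → b ∈ 𝒜 m →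
    d (a * b) = d a * b + ε lam l • (a * d b))

/-- `A` is graded `D`-simple: the only `Γ`-graded two-sided ideals of `A` stable under
all derivations in `D` are `0` and `A`. -/
def IsGradedDSimple {F : Type*} [Field F] {Γ : Type*} [AddCommGroup Γ] [DecidableEq Γ]
    {A : Type*} [Ring A] [Algebra F A]
    (𝒜 : Γ → Submodule F A) [GradedAlgebra 𝒜] (D : Set (Module.End F A)) : Prop :=
  ∀ I : Submodule F A,
    (∀ (a x : A), x ∈ I → a * x ∈ I ∧ x * a ∈ I) →
    (∀ x ∈ I, ∀ γ : Γ, (DirectSum.decompose 𝒜 x γ : A) ∈ I) →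
    (∀ d ∈ D, ∀ x ∈ I, d x ∈ I) →
    I = ⊥ ∨ I = ⊤

/-- The generalized weight space `A(χ)^{(m)}`: the set of `u ∈ A` killed by every
composition `(d₁ − χ(d₁))∘⋯∘(d_{m+1} − χ(d_{m+1}))` with `d₁,…,d_{m+1} ∈ D`. -/
def wtSpace {F : Type*} [Field F] {A : Type*} [Ring A] [Algebra F A]
    (D : Set (Module.End F A)) (χ : Module.End F A → F) : ℕ → Set A
  | 0 => {u : A | ∀ d ∈ D, d u - χ d • u = 0}
  | n + 1 => {u : A | ∀ d ∈ D, d u - χ d • u ∈ wtSpace D χ n}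

section Stage1

variable {F : Type*} [Field F] {Γ : Type*} [AddCommGroup Γ] [DecidableEq Γ]
variable {A : Type*} [Ring A] [Algebra F A]
variable {ε : Γ → Γ → F} {𝒜 : Γ → Submodule F A}

-- ε facts
lemma eps_ne_zero (hskew : ∀ l m : Γ, ε l m * ε m l = 1) (l m : Γ) : ε l m ≠ 0 := by
  intro h
  have := hskew l m
  rw [h, zero_mul] at this
  exact zero_ne_one this

lemma eps_zero_right (hskew : ∀ l m : Γ, ε l m * ε m l = 1)
    (hmul : ∀ l m n : Γ, ε l (m + n) = ε l m * ε l n) (l : Γ) : ε l 0 = 1 := by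
  have h := hmul l 0 0
  rw [add_zero] at h
  have h0 := eps_ne_zero hskew l 0
  have : ε l 0 * 1 = ε l 0 * ε l 0 := by rw [mul_one]; exact h
  exact (mul_left_cancel₀ h0 this).symm

lemma eps_neg_right (hskew : ∀ l m : Γ, ε l m * ε m l = 1)
    (hmul : ∀ l m n : Γ, ε l (m + n) = ε l m * ε l n) (l m : Γ) :
    ε l m * ε l (-m) = 1 := by
  rw [← hmul, add_neg_cancel, eps_zero_right hskew hmul]

lemma eps_self (hskew : ∀ l m : Γ, ε l m * ε m l = 1) (l : Γ) :
    ε l l = 1 ∨ ε l l = -1 :=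
  mul_self_eq_one_iff.1 (hskew l l)

-- wtSpace basics (χ = 0)
variable {S : Set (Module.End F A)}

lemma mem_wt0 {u : A} : u ∈ wtSpace S (0 : Module.End F A → F) 0 ↔ ∀ d ∈ S, d u = 0 := by
  simp [wtSpace]

lemma mem_wtsucc {u : A} {n : ℕ} :
    u ∈ wtSpace S (0 : Module.End F A → F) (n + 1) ↔
      ∀ d ∈ S, d u ∈ wtSpace S (0 : Module.End F A → F) n := by
  simp [wtSpace]

lemma wt_zero_mem : ∀ n, (0 : A) ∈ wtSpace S (0 : Module.End F A → F) n
  | 0 => mem_wt0.2 fun d _ => map_zero d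
  | n + 1 => mem_wtsucc.2 fun d _ => by rw [map_zero]; exact wt_zero_mem n

lemma wt_add_mem : ∀ n, ∀ {u v : A}, u ∈ wtSpace S (0 : Module.End F A → F) n →
    v ∈ wtSpace S (0 : Module.End F A → F) n →
    u + v ∈ wtSpace S (0 : Module.End F A → F) n
  | 0, u, v, hu, hv => mem_wt0.2 fun d hd => by
      rw [map_add, mem_wt0.1 hu d hd, mem_wt0.1 hv d hd, add_zero]
  | n + 1, u, v, hu, hv => mem_wtsucc.2 fun d hd => by
      rw [map_add]
      exact wt_add_mem n (mem_wtsucc.1 hu d hd) (mem_wtsucc.1 hv d hd)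

lemma wt_smul_mem : ∀ n, ∀ {c : F} {u : A}, u ∈ wtSpace S (0 : Module.End F A → F) n →
    c • u ∈ wtSpace S (0 : Module.End F A → F) n
  | 0, c, u, hu => mem_wt0.2 fun d hd => by rw [map_smul, mem_wt0.1 hu d hd, smul_zero]
  | n + 1, c, u, hu => mem_wtsucc.2 fun d hd => by
      rw [map_smul]
      exact wt_smul_mem n (mem_wtsucc.1 hu d hd)

/-- the level as a submodule -/
def wtSub (S : Set (Module.End F A)) (n : ℕ) : Submodule F A where
  carrier := wtSpace S (0 : Module.End F A → F) n
  add_mem' := wt_add_mem n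
  zero_mem' := wt_zero_mem n
  smul_mem' _ _ := wt_smul_mem n

@[simp] lemma mem_wtSub {n : ℕ} {u : A} :
    u ∈ wtSub S n ↔ u ∈ wtSpace S (0 : Module.End F A → F) n := Iff.rfl

lemma wt_mono {n : ℕ} : ∀ {u : A}, u ∈ wtSpace S (0 : Module.End F A → F) n →
    u ∈ wtSpace S (0 : Module.End F A → F) (n + 1) := by
  induction n with
  | zero =>
    exact fun hu => mem_wtsucc.2 fun d hd => by
      rw [mem_wt0.1 hu d hd]
      exact wt_zero_mem 0
  | succ n IH => exact fun hu => mem_wtsucc.2 fun d hd => IH (mem_wtsucc.1 hu d hd)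

lemma wt_le {n n' : ℕ} (h : n ≤ n') {u : A}
    (hu : u ∈ wtSpace S (0 : Module.End F A → F) n) :
    u ∈ wtSpace S (0 : Module.End F A → F) n' := by
  induction n' with
  | zero => exact (Nat.le_zero.1 h) ▸ hu
  | succ n' IH =>
    rcases Nat.lt_or_ge n (n' + 1) with h' | h'
    · exact wt_mono (IH (Nat.lt_succ_iff.1 h'))
    · exact (Nat.le_antisymm h h') ▸ hu

-- derivation kills 1
lemma der_one (hskew : ∀ l m : Γ, ε l m * ε m l = 1)
    (hmul : ∀ l m n : Γ, ε l (m + n) = ε l m * ε l n)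
    [GradedAlgebra 𝒜] {γ : Γ} {d : Module.End F A}
    (hd : IsHomColorDer ε 𝒜 γ d) : d 1 = 0 := by
  have h1 : (1 : A) ∈ 𝒜 0 := SetLike.one_mem_graded 𝒜
  have h := hd.2 0 0 1 1 h1 h1
  rw [mul_one, one_mul, mul_one, eps_zero_right hskew hmul, one_smul] at h
  have h2 : d 1 = d 1 + d 1 := by simpa using h
  have := (left_eq_add).1 h2
  exact this
end Stage1

section Stage2

variable {F : Type*} [Field F] {Γ : Type*} [AddCommGroup Γ] [DecidableEq Γ]
variable {A : Type*} [Ring A] [Algebra F A]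
variable {ε : Γ → Γ → F} {𝒜 : Γ → Submodule F A}

/-- The projection onto the `γ`-component, as a linear map. -/
noncomputable def proj (𝒜 : Γ → Submodule F A) [GradedAlgebra 𝒜] (γ : Γ) : A →ₗ[F] A :=
  (𝒜 γ).subtype ∘ₗ (DirectSum.component F Γ (fun i => (𝒜 i : Submodule F A)) γ) ∘ₗ
    (DirectSum.decomposeLinearEquiv 𝒜).toLinearMap

variable [GradedAlgebra 𝒜]

lemma proj_apply (γ : Γ) (x : A) : proj 𝒜 γ x = (DirectSum.decompose 𝒜 x γ : A) := rfl

/-- A linear map shifting degrees by `σ` commutes with taking components. -/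
lemma decompose_map (f : A →ₗ[F] A) (σ : Γ → Γ) (hσ : Function.Injective σ)
    (hf : ∀ ν : Γ, ∀ a ∈ 𝒜 ν, f a ∈ 𝒜 (σ ν)) (x : A) (μ : Γ) :
    f (DirectSum.decompose 𝒜 x μ : A) = (DirectSum.decompose 𝒜 (f x) (σ μ) : A) := by
  classical
  have key : (DirectSum.decompose 𝒜 (f x) (σ μ) : A) = proj 𝒜 (σ μ) (f x) := rfl
  rw [key]
  have hx : f x = ∑ ν ∈ (DirectSum.decompose 𝒜 x).support,
      f ((DirectSum.decompose 𝒜 x ν : A)) := by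
    conv_lhs => rw [← DirectSum.sum_support_decompose 𝒜 x]
    exact map_sum f _ _
  rw [hx, map_sum]
  have hterm : ∀ ν, proj 𝒜 (σ μ) (f ((DirectSum.decompose 𝒜 x ν : A)))
      = if ν = μ then f ((DirectSum.decompose 𝒜 x ν : A)) else 0 := by
    intro ν
    have hmem : f ((DirectSum.decompose 𝒜 x ν : A)) ∈ 𝒜 (σ ν) :=
      hf ν _ (SetLike.coe_mem _)
    by_cases hν : ν = μ
    · subst hν
      rw [proj_apply, DirectSum.decompose_of_mem_same 𝒜 hmem, if_pos rfl]
    · rw [proj_apply, DirectSum.decompose_of_mem_ne 𝒜 hmem (fun h => hν (hσ h)), if_neg hν]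
  rw [Finset.sum_congr rfl fun ν _ => hterm ν]
  rw [Finset.sum_ite_eq' _ μ _]
  by_cases hμ : μ ∈ (DirectSum.decompose 𝒜 x).support
  · rw [if_pos hμ]
  · rw [if_neg hμ]
    have : DirectSum.decompose 𝒜 x μ = 0 := DFinsupp.notMem_support_iff.mp hμ
    rw [this]
    simp

variable {S : Set (Module.End F A)}

/-- Levels of the zero weight space are graded. -/
lemma wt_proj (hShom : ∀ d ∈ S, ∃ γ, IsHomColorDer ε 𝒜 γ d) :
    ∀ m, ∀ {u : A}, u ∈ wtSpace S (0 : Module.End F A → F) m →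
      ∀ μ, (DirectSum.decompose 𝒜 u μ : A) ∈ wtSpace S (0 : Module.End F A → F) m := by
  intro m
  induction m with
  | zero =>
    intro u hu μ
    refine mem_wt0.2 fun d hd => ?_
    obtain ⟨γ, hd'⟩ := hShom d hd
    rw [decompose_map (d : A →ₗ[F] A) (fun ν => γ + ν) (fun x y h => by
        exact add_left_cancel h) hd'.1 u μ]
    rw [mem_wt0.1 hu d hd]
    simp
  | succ m IH =>
    intro u hu μ
    refine mem_wtsucc.2 fun d hd => ?_
    obtain ⟨γ, hd'⟩ := hShom d hd
    rw [decompose_map (d : A →ₗ[F] A) (fun ν => γ + ν) (fun x y h => by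
        exact add_left_cancel h) hd'.1 u μ]
    exact IH (mem_wtsucc.1 hu d hd) _

/-- products multiply levels -/
lemma wt_mul (hShom : ∀ d ∈ S, ∃ γ, IsHomColorDer ε 𝒜 γ d) :
    ∀ k p q, p + q = k → ∀ {a b : A} {α β : Γ}, a ∈ 𝒜 α → b ∈ 𝒜 β →
    a ∈ wtSpace S (0 : Module.End F A → F) p →
    b ∈ wtSpace S (0 : Module.End F A → F) q →
    a * b ∈ wtSpace S (0 : Module.End F A → F) k := by
  intro k
  induction k using Nat.strong_induction_on with
  | _ k IH =>
    intro p q hpq a b α β ha hb hpa hqb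
    rcases k with _ | k'
    · obtain ⟨hp, hq⟩ : p = 0 ∧ q = 0 := by omega
      subst hp; subst hq
      refine mem_wt0.2 fun d hd => ?_
      obtain ⟨γ, hd'⟩ := hShom d hd
      rw [hd'.2 α β a b ha hb, mem_wt0.1 hpa d hd, mem_wt0.1 hqb d hd, zero_mul,
        mul_zero, smul_zero, add_zero]
    · refine mem_wtsucc.2 fun d hd => ?_
      obtain ⟨γ, hd'⟩ := hShom d hd
      rw [hd'.2 α β a b ha hb]
      have hda : d a ∈ 𝒜 (γ + α) := hd'.1 α a ha
      have hdb : d b ∈ 𝒜 (γ + β) := hd'.1 β b hb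
      have t1 : d a * b ∈ wtSub S k' := by
        rcases p with _ | p'
        · rw [mem_wt0.1 hpa d hd, zero_mul]; exact zero_mem _
        · exact IH k' (Nat.lt_succ_self _) p' q (by omega) hda hb
            (mem_wtsucc.1 hpa d hd) hqb
      have t2 : a * d b ∈ wtSub S k' := by
        rcases q with _ | q'
        · rw [mem_wt0.1 hqb d hd, mul_zero]; exact zero_mem _
        · exact IH k' (Nat.lt_succ_self _) p q' (by omega) ha hdb hpa
            (mem_wtsucc.1 hqb d hd)
      exact (wtSub S k').add_mem t1 ((wtSub S k').smul_mem _ t2)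

end Stage2

section Stage3

variable {F : Type*} [Field F] {Γ : Type*} [AddCommGroup Γ] [DecidableEq Γ]
variable {A : Type*} [Ring A] [Algebra F A]
variable {ε : Γ → Γ → F} {𝒜 : Γ → Submodule F A} [GradedAlgebra 𝒜]
variable {D : Submodule F (Module.End F A)}

lemma exists_inverse
    (hskew : ∀ l m : Γ, ε l m * ε m l = 1)
    (hmul : ∀ l m n : Γ, ε l (m + n) = ε l m * ε l n)
    (hcomm : ∀ (l m : Γ) (a b : A), a ∈ 𝒜 l → b ∈ 𝒜 m → a * b = ε l m • (b * a))
    (hDgraded : D = Submodule.span F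
      {d : Module.End F A | d ∈ D ∧ ∃ γ : Γ, IsHomColorDer ε 𝒜 γ d})
    (hsimple : IsGradedDSimple 𝒜 (D : Set (Module.End F A)))
    {s : A} {δ : Γ} (hs : s ∈ 𝒜 δ) (hs0 : s ≠ 0)
    (hker : ∀ d ∈ {d : Module.End F A | d ∈ D ∧ ∃ γ : Γ, IsHomColorDer ε 𝒜 γ d}, d s = 0) :
    ∃ r : A, r ∈ 𝒜 (-δ) ∧
      (∀ d ∈ {d : Module.End F A | d ∈ D ∧ ∃ γ : Γ, IsHomColorDer ε 𝒜 γ d}, d r = 0) ∧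
      s * r = 1 ∧ r * s = 1 := by
  classical
  set S : Set (Module.End F A) :=
    {d : Module.End F A | d ∈ D ∧ ∃ γ : Γ, IsHomColorDer ε 𝒜 γ d} with hS
  set G : Set A := {x : A | ∃ a b : A, x = a * s * b} with hG
  set I : Submodule F A := Submodule.span F G with hI
  -- absorption
  have habsl : ∀ (c x : A), x ∈ I → c * x ∈ I := by
    intro c x hx
    induction hx using Submodule.span_induction with
    | mem y hy =>
      obtain ⟨a, b, rfl⟩ := hy
      refine Submodule.subset_span ⟨c * a, b, ?_⟩
      rw [← mul_assoc, ← mul_assoc]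
    | zero => rw [mul_zero]; exact zero_mem _
    | add y z _ _ hy hz => rw [mul_add]; exact add_mem hy hz
    | smul t y _ hy => rw [mul_smul_comm]; exact Submodule.smul_mem _ t hy
  have habsr : ∀ (c x : A), x ∈ I → x * c ∈ I := by
    intro c x hx
    induction hx using Submodule.span_induction with
    | mem y hy =>
      obtain ⟨a, b, rfl⟩ := hy
      refine Submodule.subset_span ⟨a, b * c, ?_⟩
      rw [← mul_assoc]
    | zero => rw [zero_mul]; exact zero_mem _
    | add y z _ _ hy hz => rw [add_mul]; exact add_mem hy hz
    | smul t y _ hy => rw [smul_mul_assoc]; exact Submodule.smul_mem _ t hy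
  -- expansion of a generator into homogeneous generators
  have hexp : ∀ a b : A, a * s * b =
      ∑ μ ∈ (DirectSum.decompose 𝒜 a).support, ∑ ν ∈ (DirectSum.decompose 𝒜 b).support,
        ((DirectSum.decompose 𝒜 a μ : A) * s * (DirectSum.decompose 𝒜 b ν : A)) := by
    intro a b
    conv_lhs => rw [← DirectSum.sum_support_decompose 𝒜 a,
      ← DirectSum.sum_support_decompose 𝒜 b]
    rw [Finset.sum_mul, Finset.sum_mul]
    exact Finset.sum_congr rfl fun μ _ => Finset.mul_sum _ _ _
  -- gradedness
  have hgr : ∀ x ∈ I, ∀ γ : Γ, (DirectSum.decompose 𝒜 x γ : A) ∈ I := by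
    intro x hx
    induction hx using Submodule.span_induction with
    | mem y hy =>
      obtain ⟨a, b, rfl⟩ := hy
      intro γ
      rw [← proj_apply, hexp a b, map_sum]
      refine Submodule.sum_mem _ fun μ _ => ?_
      rw [map_sum]
      refine Submodule.sum_mem _ fun ν _ => ?_
      have hmem : (DirectSum.decompose 𝒜 a μ : A) * s * (DirectSum.decompose 𝒜 b ν : A)
          ∈ 𝒜 (μ + δ + ν) :=
        SetLike.mul_mem_graded (SetLike.mul_mem_graded (SetLike.coe_mem _) hs)
          (SetLike.coe_mem _)
      by_cases hγ : μ + δ + ν = γ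
      · rw [proj_apply, ← hγ, DirectSum.decompose_of_mem_same 𝒜 hmem]
        exact Submodule.subset_span ⟨_, _, rfl⟩
      · rw [proj_apply, DirectSum.decompose_of_mem_ne 𝒜 hmem hγ]
        exact zero_mem _
    | zero => intro γ; rw [← proj_apply, map_zero]; exact zero_mem _
    | add y z _ _ hy hz =>
      intro γ
      rw [← proj_apply, map_add]
      exact add_mem (hy γ) (hz γ)
    | smul t y _ hy =>
      intro γ
      rw [← proj_apply, map_smul]
      exact Submodule.smul_mem _ t (hy γ)
  -- stability under S
  have hstS : ∀ d ∈ S, ∀ x ∈ I, d x ∈ I := by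
    rintro d ⟨hdD, γ, hd⟩ x hx
    induction hx using Submodule.span_induction with
    | mem y hy =>
      obtain ⟨a, b, rfl⟩ := hy
      rw [hexp a b, map_sum]
      refine Submodule.sum_mem _ fun μ _ => ?_
      rw [map_sum]
      refine Submodule.sum_mem _ fun ν _ => ?_
      have haμ : (DirectSum.decompose 𝒜 a μ : A) ∈ 𝒜 μ := SetLike.coe_mem _
      have hbν : (DirectSum.decompose 𝒜 b ν : A) ∈ 𝒜 ν := SetLike.coe_mem _
      have hsb : s * (DirectSum.decompose 𝒜 b ν : A) ∈ 𝒜 (δ + ν) :=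
        SetLike.mul_mem_graded hs hbν
      rw [mul_assoc]
      rw [hd.2 μ (δ + ν) _ _ haμ hsb]
      refine add_mem ?_ (Submodule.smul_mem _ _ ?_)
      · rw [← mul_assoc]
        exact Submodule.subset_span ⟨_, _, rfl⟩
      · rw [hd.2 δ ν s _ hs hbν, hker d ⟨hdD, γ, hd⟩, zero_mul, zero_add, mul_smul_comm]
        refine Submodule.smul_mem _ _ ?_
        rw [← mul_assoc]
        exact Submodule.subset_span ⟨_, _, rfl⟩
    | zero => rw [map_zero]; exact zero_mem _
    | add y z _ _ hy hz => rw [map_add]; exact add_mem hy hz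
    | smul t y _ hy => rw [map_smul]; exact Submodule.smul_mem _ t hy
  have hst0 : ∀ x ∈ I, ∀ d ∈ Submodule.span F S, d x ∈ I := by
    intro x hx d hd
    induction hd using Submodule.span_induction with
    | mem e he => exact hstS e he x hx
    | zero => rw [LinearMap.zero_apply]; exact zero_mem _
    | add e f _ _ he hf => rw [LinearMap.add_apply]; exact add_mem he hf
    | smul t e _ he => rw [LinearMap.smul_apply]; exact Submodule.smul_mem _ t he
  have hst : ∀ d ∈ D, ∀ x ∈ I, d x ∈ I := by
    intro d hd x hx
    exact hst0 x hx d (by rw [hDgraded] at hd; exact hd)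
  -- simplicity
  have hsI : s ∈ I := Submodule.subset_span ⟨1, 1, by rw [one_mul, mul_one]⟩
  have hItop : I = ⊤ := by
    rcases hsimple I (fun a x hx => ⟨habsl a x hx, habsr a x hx⟩) hgr hst with h | h
    · exact absurd (h ▸ hsI) (by simpa using hs0)
    · exact h
  have h1I : (1 : A) ∈ I := hItop ▸ Submodule.mem_top
  -- I is contained in s*A and A*s
  have hleft : I ≤ LinearMap.range (LinearMap.mulLeft F s) := by
    rw [hI, Submodule.span_le]
    rintro x ⟨a, b, rfl⟩
    refine ⟨∑ μ ∈ (DirectSum.decompose 𝒜 a).support,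
      ε μ δ • ((DirectSum.decompose 𝒜 a μ : A) * b), ?_⟩
    rw [LinearMap.mulLeft_apply, Finset.mul_sum]
    conv_rhs => rw [← DirectSum.sum_support_decompose 𝒜 a, Finset.sum_mul, Finset.sum_mul]
    refine Finset.sum_congr rfl fun μ _ => ?_
    rw [mul_smul_comm, hcomm μ δ _ s (SetLike.coe_mem _) hs, smul_mul_assoc, mul_assoc]
  have hright : I ≤ LinearMap.range (LinearMap.mulRight F s) := by
    rw [hI, Submodule.span_le]
    rintro x ⟨a, b, rfl⟩
    refine ⟨∑ ν ∈ (DirectSum.decompose 𝒜 b).support,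
      ε δ ν • (a * (DirectSum.decompose 𝒜 b ν : A)), ?_⟩
    rw [LinearMap.mulRight_apply, Finset.sum_mul]
    conv_rhs => rw [← DirectSum.sum_support_decompose 𝒜 b, Finset.mul_sum]
    refine Finset.sum_congr rfl fun ν _ => ?_
    rw [smul_mul_assoc, mul_assoc, ← mul_smul_comm, ← hcomm δ ν s _ hs (SetLike.coe_mem _),
      ← mul_assoc]
  obtain ⟨r', hr'⟩ := hleft h1I
  obtain ⟨r'', hr''⟩ := hright h1I
  rw [LinearMap.mulLeft_apply] at hr'
  rw [LinearMap.mulRight_apply] at hr''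
  -- homogenize
  set r₀ : A := (DirectSum.decompose 𝒜 r' (-δ) : A) with hr₀
  have hsr₀ : s * r₀ = 1 := by
    have := decompose_map (𝒜 := 𝒜) (LinearMap.mulLeft F s) (fun ν => δ + ν)
      (fun x y h => add_left_cancel h)
      (fun ν a ha => SetLike.mul_mem_graded hs ha) r' (-δ)
    rw [LinearMap.mulLeft_apply, LinearMap.mulLeft_apply] at this
    rw [hr₀, this, hr', add_neg_cancel,
      DirectSum.decompose_of_mem_same 𝒜 (SetLike.one_mem_graded 𝒜)]
  have hr₀s : r₀ * s = 1 := by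
    have : r'' = r₀ := by
      calc r'' = r'' * (s * r₀) := by rw [hsr₀, mul_one]
      _ = (r'' * s) * r₀ := by rw [mul_assoc]
      _ = r₀ := by rw [hr'', one_mul]
    rw [← this, hr'']
  have hr₀ker : ∀ d ∈ S, d r₀ = 0 := by
    rintro d ⟨hdD, γ, hd⟩
    have h1 : d (s * r₀) = 0 := by rw [hsr₀]; exact der_one hskew hmul hd
    rw [hd.2 δ (-δ) s r₀ hs (SetLike.coe_mem _), hker d ⟨hdD, γ, hd⟩, zero_mul,
      zero_add] at h1
    have h2 : s * d r₀ = 0 := by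
      rcases smul_eq_zero.1 h1 with h | h
      · exact absurd h (eps_ne_zero hskew γ δ)
      · exact h
    calc d r₀ = (r₀ * s) * d r₀ := by rw [hr₀s, one_mul]
    _ = r₀ * (s * d r₀) := by rw [mul_assoc]
    _ = 0 := by rw [h2, mul_zero]
  exact ⟨r₀, SetLike.coe_mem _, hr₀ker, hsr₀, hr₀s⟩

end Stage3

section Stage4

variable {F : Type*} [Field F] {Γ : Type*} [AddCommGroup Γ] [DecidableEq Γ]
variable {A : Type*} [Ring A] [Algebra F A]
variable {ε : Γ → Γ → F} {𝒜 : Γ → Submodule F A}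

/-- extract a finite family from a spanning set -/
lemma exists_fin_span {M : Type*} [AddCommGroup M] [Module F M] {N : Submodule F M}
    [FiniteDimensional F N] {S : Set M} (hN : N = Submodule.span F S) :
    ∃ (n : ℕ) (f : Fin n → M), (∀ i, f i ∈ S) ∧ N ≤ Submodule.span F (Set.range f) := by
  classical
  have hfg : N.FG := (Submodule.fg_iff_finiteDimensional N).2 ‹_›
  obtain ⟨V, hV⟩ := hfg
  have key : ∀ v ∈ V, ∃ T : Finset M, ↑T ⊆ S ∧ v ∈ Submodule.span F (T : Set M) := by
    intro v hv
    have hvN : v ∈ Submodule.span F S := by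
      rw [← hN, ← hV]
      exact Submodule.subset_span hv
    exact Submodule.mem_span_finite_of_mem_span hvN
  choose T hTS hTmem using key
  set W : Finset M := V.attach.biUnion (fun v => T v.1 v.2) with hW
  have hWS : ∀ x ∈ W, x ∈ S := by
    intro x hx
    obtain ⟨v, _, hxv⟩ := Finset.mem_biUnion.1 hx
    exact hTS v.1 v.2 hxv
  have hNW : N ≤ Submodule.span F (W : Set M) := by
    rw [← hV, Submodule.span_le]
    intro v hv
    have hvV : v ∈ V := Finset.mem_coe.1 hv
    refine Submodule.span_mono (fun x hx => ?_) (hTmem v hvV)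
    exact Finset.mem_coe.2 (Finset.mem_biUnion.2
      ⟨⟨v, hvV⟩, V.mem_attach _, Finset.mem_coe.1 hx⟩)
  refine ⟨W.toList.length, fun i => W.toList.get i, ?_, ?_⟩
  · intro i
    exact hWS _ (Finset.mem_toList.1 (W.toList.get_mem i))
  · refine le_trans hNW (Submodule.span_mono fun x hx => ?_)
    have hx' : x ∈ W.toList := Finset.mem_toList.2 (Finset.mem_coe.1 hx)
    obtain ⟨i, hi⟩ := List.get_of_mem hx'
    exact ⟨i, hi⟩

variable {n : ℕ}

/-- composition of a list of endomorphisms from a family -/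
def compL (f : Fin n → Module.End F A) (l : List (Fin n)) : Module.End F A :=
  (l.map f).prod

lemma compL_nil {f : Fin n → Module.End F A} : compL f ([] : List (Fin n)) = 1 := rfl

lemma compL_cons {f : Fin n → Module.End F A} {i : Fin n} {l : List (Fin n)} :
    compL f (i :: l) = f i * compL f l := by
  simp [compL]

lemma compL_cons_apply {f : Fin n → Module.End F A} {i : Fin n} {l : List (Fin n)} (u : A) :
    compL f (i :: l) u = f i (compL f l u) := by
  rw [compL_cons]; rfl

lemma compL_replicate {f : Fin n → Module.End F A} {i : Fin n} :
    ∀ k, compL f (List.replicate k i) = (f i) ^ k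
  | 0 => by rw [pow_zero]; rfl
  | k + 1 => by
    rw [List.replicate_succ, compL_cons, compL_replicate k, pow_succ']

variable {S : Set (Module.End F A)}

lemma comp_mem_wt {f : Fin n → Module.End F A} (hf : ∀ i, f i ∈ S) :
    ∀ (l : List (Fin n)) (j : ℕ) {u : A},
      u ∈ wtSpace S (0 : Module.End F A → F) (l.length + j) →
      compL f l u ∈ wtSpace S (0 : Module.End F A → F) j := by
  intro l
  induction l with
  | nil => intro j u hu; rw [compL_nil]; simpa using hu
  | cons i l IH =>
    intro j u hu
    rw [compL_cons_apply]
    have h1 : (i :: l).length + j = l.length + (j + 1) := by simp; omega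
    rw [h1] at hu
    exact mem_wtsucc.1 (IH (j + 1) hu) (f i) (hf i)

lemma comp_kill {f : Fin n → Module.End F A} (hf : ∀ i, f i ∈ S) {m : ℕ} {u : A}
    (hu : u ∈ wtSpace S (0 : Module.End F A → F) m) :
    ∀ l : List (Fin n), l.length = m + 1 → compL f l u = 0 := by
  rintro (_ | ⟨i, l⟩) hl
  · simp at hl
  · have hl' : l.length = m := by simpa using hl
    rw [compL_cons_apply]
    have : compL f l u ∈ wtSpace S (0 : Module.End F A → F) 0 := by
      refine comp_mem_wt hf l 0 ?_
      rw [hl', add_zero]; exact hu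
    exact mem_wt0.1 this (f i) (hf i)

lemma comp_hom {f : Fin n → Module.End F A} {γd : Fin n → Γ}
    (hhom : ∀ i, IsHomColorDer ε 𝒜 (γd i) (f i)) :
    ∀ (l : List (Fin n)) {u : A} {μ : Γ}, u ∈ 𝒜 μ →
      compL f l u ∈ 𝒜 ((l.map γd).sum + μ) := by
  intro l
  induction l with
  | nil => intro u μ hu; rw [compL_nil]; simpa using hu
  | cons i l IH =>
    intro u μ hu
    rw [compL_cons_apply]
    have := (hhom i).1 _ _ (IH hu)
    rw [← add_assoc] at this
    simpa using this

lemma comp_swap {f : Fin n → Module.End F A} {γd : Fin n → Γ}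
    (hcij : ∀ i j, f i * f j = ε (γd i) (γd j) • (f j * f i)) :
    ∀ (l : List (Fin n)) (i : Fin n), ∃ c : F, ∀ u : A,
      f i (compL f l u) = c • compL f l (f i u) := by
  intro l
  induction l with
  | nil => exact fun i => ⟨1, fun u => by rw [compL_nil, one_smul]; rfl⟩
  | cons j l IH =>
    intro i
    obtain ⟨c, hc⟩ := IH i
    refine ⟨ε (γd i) (γd j) * c, fun u => ?_⟩
    rw [compL_cons_apply]
    have h1 : f i (f j (compL f l u)) = ε (γd i) (γd j) • f j (f i (compL f l u)) := by
      have := congrArg (fun e : Module.End F A => e (compL f l u)) (hcij i j)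
      simpa using this
    rw [h1, hc, map_smul, compL_cons_apply, smul_smul]

/-- reduce action of an arbitrary element of the span to the family -/
lemma span_apply_mem {f : Fin n → Module.End F A} (W : Submodule F A) {x : A}
    (hx : ∀ i, f i x ∈ W) {d : Module.End F A}
    (hd : d ∈ Submodule.span F (Set.range f)) : d x ∈ W := by
  induction hd using Submodule.span_induction with
  | mem e he => obtain ⟨i, rfl⟩ := he; exact hx i
  | zero => rw [LinearMap.zero_apply]; exact zero_mem _
  | add e g _ _ he hg => rw [LinearMap.add_apply]; exact add_mem he hg
  | smul t e _ he => rw [LinearMap.smul_apply]; exact Submodule.smul_mem _ t he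

end Stage4

section Stage5

set_option maxHeartbeats 1000000

variable {F : Type*} [Field F] [CharZero F] {Γ : Type*} [AddCommGroup Γ] [DecidableEq Γ]
variable {A : Type*} [Ring A] [Algebra F A]
variable {ε : Γ → Γ → F} {𝒜 : Γ → Submodule F A} [GradedAlgebra 𝒜]
variable {D : Submodule F (Module.End F A)}

lemma main_hom
    (hskew : ∀ l m : Γ, ε l m * ε m l = 1)
    (hmul : ∀ l m n : Γ, ε l (m + n) = ε l m * ε l n)
    (hcomm : ∀ (l m : Γ) (a b : A), a ∈ 𝒜 l → b ∈ 𝒜 m → a * b = ε l m • (b * a))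
    (hDgraded : D = Submodule.span F
      {d : Module.End F A | d ∈ D ∧ ∃ γ : Γ, IsHomColorDer ε 𝒜 γ d})
    (hDcomm : ∀ d d' : Module.End F A, d ∈ D → d' ∈ D → ∀ γ γ' : Γ,
      IsHomColorDer ε 𝒜 γ d → IsHomColorDer ε 𝒜 γ' d' →
      d * d' = ε γ γ' • (d' * d))
    (hsimple : IsGradedDSimple 𝒜 (D : Set (Module.End F A)))
    {n : ℕ} {f : Fin n → Module.End F A} {γd : Fin n → Γ}
    (hfS : ∀ i, f i ∈ {d : Module.End F A | d ∈ D ∧ ∃ γ : Γ, IsHomColorDer ε 𝒜 γ d})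
    (hfhom : ∀ i, IsHomColorDer ε 𝒜 (γd i) (f i))
    (hspan : D ≤ Submodule.span F (Set.range f)) :
    ∀ m : ℕ, ∀ (T : Finset (Fin n)) (u : A) (μ : Γ), u ∈ 𝒜 μ →
      u ∈ wtSpace {d : Module.End F A | d ∈ D ∧ ∃ γ : Γ, IsHomColorDer ε 𝒜 γ d}
        (0 : Module.End F A → F) m →
      (∀ i ∉ T, f i u = 0) →
      u ∈ Algebra.adjoin F
        (wtSpace {d : Module.End F A | d ∈ D ∧ ∃ γ : Γ, IsHomColorDer ε 𝒜 γ d}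
          (0 : Module.End F A → F) 1) := by
  classical
  set S : Set (Module.End F A) :=
    {d : Module.End F A | d ∈ D ∧ ∃ γ : Γ, IsHomColorDer ε 𝒜 γ d} with hSdef
  set B : Subalgebra F A :=
    Algebra.adjoin F (wtSpace S (0 : Module.End F A → F) 1) with hBdef
  have hShom : ∀ d ∈ S, ∃ γ, IsHomColorDer ε 𝒜 γ d := fun d hd => hd.2
  have hfD : ∀ i, f i ∈ D := fun i => (hfS i).1
  have hcij : ∀ i j, f i * f j = ε (γd i) (γd j) • (f j * f i) := fun i j =>
    hDcomm _ _ (hfD i) (hfD j) _ _ (hfhom i) (hfhom j)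
  have hDspan : ∀ d ∈ S, d ∈ Submodule.span F (Set.range f) := fun d hd => hspan hd.1
  have h1wt : ∀ j : ℕ, (1 : A) ∈ wtSpace S (0 : Module.End F A → F) j := by
    intro j
    have h0 : (1 : A) ∈ wtSpace S (0 : Module.End F A → F) 0 := by
      refine mem_wt0.2 fun d hd => ?_
      obtain ⟨γ, hγ⟩ := hShom d hd
      exact der_one hskew hmul hγ
    exact wt_le (Nat.zero_le j) h0
  have hall_case : ∀ u : A, (∀ i, f i u = 0) → u ∈ B := by
    intro u hall
    refine Algebra.subset_adjoin ?_
    refine mem_wtsucc.2 fun d hd => ?_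
    exact span_apply_mem (wtSub S 0)
      (fun i => by rw [hall i]; exact Submodule.zero_mem _) (hDspan d hd)
  intro m
  induction m using Nat.strong_induction_on with
  | _ m IHm =>
  suffices H : ∀ (k : ℕ) (T : Finset (Fin n)), T.card ≤ k → ∀ (u : A) (μ : Γ), u ∈ 𝒜 μ →
      u ∈ wtSpace S (0 : Module.End F A → F) m → (∀ i ∉ T, f i u = 0) → u ∈ B by
    intro T u μ h1 h2 h3
    exact H T.card T le_rfl u μ h1 h2 h3
  intro k
  induction k with
  | zero =>
    intro T hT u μ hu𝒜 huwt hoffT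
    refine hall_case u fun i => hoffT i ?_
    rw [Finset.card_eq_zero.1 (Nat.le_zero.1 hT)]
    exact Finset.notMem_empty i
  | succ k IHk =>
    intro T hT u μ hu𝒜 huwt hoffT
    by_cases hall : ∀ i, f i u = 0
    · exact hall_case u hall
    · push_neg at hall
      obtain ⟨i₀, hi₀⟩ := hall
      have hi₀T : i₀ ∈ T := by
        by_contra h
        exact hi₀ (hoffT i₀ h)
      -- m cannot be 0
      rcases m with _ | m'
      · exact absurd (mem_wt0.1 huwt (f i₀) (hfS i₀)) hi₀
      -- off-T derivations kill all compositions of u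
      have hkill_off : ∀ i ∉ T, ∀ l'' : List (Fin n), f i (compL f l'' u) = 0 := by
        intro i hi l''
        obtain ⟨c, hc⟩ := comp_swap hcij l'' i
        rw [hc, hoffT i hi, map_zero, smul_zero]
      -- the chain predicate
      set P : ℕ → Prop := fun L => ∃ l : List (Fin n),
        (∀ i ∈ l, i ∈ T) ∧ l.length = L ∧ compL f l u ≠ 0 with hPdef
      letI : DecidablePred P := fun _ => Classical.propDecidable _
      have hP1 : P 1 := by
        refine ⟨[i₀], ?_, rfl, ?_⟩
        · intro i hi
          rw [List.mem_singleton] at hi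
          exact hi ▸ hi₀T
        · rw [compL_cons_apply, compL_nil]
          exact hi₀
      have hm1 : 1 ≤ m' + 1 := le_refl 1 |>.trans (by omega)
      set N : ℕ := Nat.findGreatest P (m' + 1) with hNdef
      have hN1 : 1 ≤ N := Nat.le_findGreatest hm1 hP1
      have hNm : N ≤ m' + 1 := Nat.findGreatest_le (m' + 1)
      have hmax : ∀ l'' : List (Fin n), (∀ i ∈ l'', i ∈ T) → l''.length = N + 1 →
          compL f l'' u = 0 := by
        intro l'' hl''T hl''len
        by_cases hNm' : N + 1 ≤ m' + 1
        · by_contra h0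
          exact Nat.findGreatest_is_greatest (Nat.lt_succ_self N) hNm'
            ⟨l'', hl''T, hl''len, h0⟩
        · have hNeq : N = m' + 1 := by omega
          exact comp_kill hfS huwt l'' (by rw [hl''len, hNeq])
      obtain ⟨l, hlT, hlen, hlw⟩ : P N := Nat.findGreatest_spec hm1 hP1
      -- split the maximal chain
      obtain ⟨i₁, l', rfl⟩ : ∃ i₁ l', l = i₁ :: l' := by
        cases l with
        | nil => exact absurd (by simpa using hlen) (Nat.ne_of_lt hN1)
        | cons a as => exact ⟨a, as, rfl⟩
      have hi₁T : i₁ ∈ T := hlT i₁ List.mem_cons_self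
      set v : A := compL f l' u with hvdef
      set w : A := compL f (i₁ :: l') u with hwdef
      have hwv : f i₁ v = w := (compL_cons_apply u).symm
      set γ : Γ := γd i₁ with hγdef
      set μv : Γ := (l'.map γd).sum + μ with hμvdef
      have hv𝒜 : v ∈ 𝒜 μv := comp_hom hfhom l' hu𝒜
      have hw𝒜 : w ∈ 𝒜 (γ + μv) := by
        rw [← hwv]
        exact (hfhom i₁).1 _ _ hv𝒜
      -- compositions of length N lie in level 0
      have hwt0_of_len : ∀ l'' : List (Fin n), (∀ i ∈ l'', i ∈ T) → l''.length = N →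
          compL f l'' u ∈ wtSpace S (0 : Module.End F A → F) 0 := by
        intro l'' hl''T hl''len
        refine mem_wt0.2 fun d hd => ?_
        have hz : ∀ i, f i (compL f l'' u) ∈ (⊥ : Submodule F A) := by
          intro i
          rw [Submodule.mem_bot F]
          by_cases hiT : i ∈ T
          · rw [← compL_cons_apply]
            refine hmax (i :: l'') ?_ (by simp [hl''len])
            intro j hj
            rcases List.mem_cons.1 hj with rfl | hj'
            · exact hiT
            · exact hl''T j hj'
          · exact hkill_off i hiT l''
        exact (Submodule.mem_bot F).1 (span_apply_mem ⊥ hz (hDspan d hd))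
      have hw0 : ∀ d ∈ S, d w = 0 := fun d hd => mem_wt0.1 (hwt0_of_len _ hlT hlen) d hd
      -- the inverse of w
      obtain ⟨r, hr𝒜, hrker, hwr, hrw⟩ :=
        exists_inverse hskew hmul hcomm hDgraded hsimple hw𝒜 hlw hw0
      have hr0 : r ∈ wtSpace S (0 : Module.End F A → F) 0 := mem_wt0.2 hrker
      have hrwt1 : r ∈ wtSpace S (0 : Module.End F A → F) 1 := wt_mono hr0
      have hrB : r ∈ B := Algebra.subset_adjoin hrwt1
      -- v has level 1
      have hvwt0comp : ∀ i, f i v ∈ wtSpace S (0 : Module.End F A → F) 0 := by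
        intro i
        by_cases hiT : i ∈ T
        · rw [hvdef, ← compL_cons_apply]
          refine hwt0_of_len (i :: l') ?_ (by simpa using hlen)
          intro j hj
          rcases List.mem_cons.1 hj with rfl | hj'
          · exact hiT
          · exact hlT j (List.mem_cons_of_mem _ hj')
        · rw [hvdef, hkill_off i hiT l']
          exact wt_zero_mem 0
      have hvwt1 : v ∈ wtSpace S (0 : Module.End F A → F) 1 :=
        mem_wtsucc.2 fun d hd => span_apply_mem (wtSub S 0) hvwt0comp (hDspan d hd)
      have hvB : v ∈ B := Algebra.subset_adjoin hvwt1
      have hv_off : ∀ i ∉ T, f i v = 0 := fun i hi => hkill_off i hi l'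
      -- the element t with (f i₁) t = 1
      set t : A := v * r with htdef
      have ht𝒜 : t ∈ 𝒜 (-γ) := by
        have h1 : t ∈ 𝒜 (μv + -(γ + μv)) := SetLike.mul_mem_graded hv𝒜 hr𝒜
        have h2 : μv + -(γ + μv) = -γ := by abel
        rw [h2] at h1
        exact h1
      have ht1 : f i₁ t = 1 := by
        rw [htdef, (hfhom i₁).2 μv _ v r hv𝒜 hr𝒜, hwv, hrker (f i₁) (hfS i₁), mul_zero,
          smul_zero, add_zero, hwr]
      have ht_off : ∀ i ∉ T, f i t = 0 := by
        intro i hi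
        rw [htdef, (hfhom i).2 μv _ v r hv𝒜 hr𝒜, hv_off i hi, zero_mul,
          hrker (f i) (hfS i), mul_zero, smul_zero, add_zero]
      have htwt1 : t ∈ wtSpace S (0 : Module.End F A → F) 1 := by
        refine mem_wtsucc.2 fun d hd => ?_
        obtain ⟨γ', hγ'⟩ := hShom d hd
        have hdt : d t = d v * r := by
          rw [htdef, hγ'.2 μv _ v r hv𝒜 hr𝒜, hrker d hd, mul_zero, smul_zero, add_zero]
        rw [hdt]
        exact wt_mul hShom 0 0 0 rfl (hγ'.1 _ _ hv𝒜) hr𝒜 (mem_wtsucc.1 hvwt1 d hd) hr0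
      have htB : t ∈ B := mul_mem hvB hrB
      have hqeq : ε γ (-γ) = ε γ γ := by
        have h1 := eps_neg_right hskew hmul γ γ
        have h2 := hskew γ γ
        exact mul_left_cancel₀ (eps_ne_zero hskew γ γ) (h1.trans h2.symm)
      -- powers of t
      have htpow𝒜 : ∀ j : ℕ, t ^ j ∈ 𝒜 (j • (-γ)) := fun j => SetLike.pow_mem_graded j ht𝒜
      have htpowwt : ∀ j : ℕ, t ^ j ∈ wtSpace S (0 : Module.End F A → F) j := by
        intro j
        induction j with
        | zero => rw [pow_zero]; exact h1wt 0
        | succ j IH =>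
          have hres := wt_mul hShom (1 + j) 1 j rfl ht𝒜 (htpow𝒜 j) htwt1 IH
          have h1j : 1 + j = j + 1 := by omega
          rw [h1j] at hres
          rw [pow_succ']
          exact hres
      have htpow_off : ∀ i ∉ T, ∀ j : ℕ, f i (t ^ j) = 0 := by
        intro i hi j
        induction j with
        | zero => rw [pow_zero]; exact der_one hskew hmul (hfhom i)
        | succ j IH =>
          rw [pow_succ', (hfhom i).2 (-γ) (j • (-γ)) t (t ^ j) ht𝒜 (htpow𝒜 j),
            ht_off i hi, zero_mul, IH, mul_zero, smul_zero, add_zero]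
      -- powers of the derivation applied to u
      have hupow𝒜 : ∀ j : ℕ, ((f i₁) ^ j) u ∈ 𝒜 (j • γ + μ) := by
        intro j
        induction j with
        | zero =>
          rw [pow_zero]
          have h0 : (0 : ℕ) • γ + μ = μ := by rw [zero_smul, zero_add]
          rw [h0]
          exact hu𝒜
        | succ j IH =>
          rw [pow_succ', Module.End.mul_apply]
          have hres := (hfhom i₁).1 _ _ IH
          have h0 : γ + (j • γ + μ) = (j + 1) • γ + μ := by rw [succ_nsmul]; abel
          rw [h0] at hres
          exact hres
      have hupowwt : ∀ j : ℕ, j ≤ m' + 1 →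
          ((f i₁) ^ j) u ∈ wtSpace S (0 : Module.End F A → F) (m' + 1 - j) := by
        intro j hj
        have hres := comp_mem_wt hfS (List.replicate j i₁) (m' + 1 - j)
          (u := u) (by rw [List.length_replicate]; have : j + (m' + 1 - j) = m' + 1 := by omega
                       rw [this]; exact huwt)
        rwa [compL_replicate] at hres
      have hupow_off : ∀ i ∉ T, ∀ j : ℕ, f i (((f i₁) ^ j) u) = 0 := by
        intro i hi j
        have := hkill_off i hi (List.replicate j i₁)
        rwa [compL_replicate] at this
      have hupow_top : ((f i₁) ^ (m' + 2)) u = 0 := by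
        have := comp_kill hfS huwt (List.replicate (m' + 2) i₁) (by rw [List.length_replicate])
        rwa [compL_replicate] at this
      -- conclusion helper: if we can correct u to u₁ killed by f i₁, we are done
      have hconc : ∀ u₁ : A, u₁ ∈ 𝒜 μ →
          u₁ ∈ wtSpace S (0 : Module.End F A → F) (m' + 1) → f i₁ u₁ = 0 →
          (∀ i ∉ T, f i u₁ = 0) → (u - u₁ ∈ B) → u ∈ B := by
        intro u₁ h𝒜 hwt h1 hoff hdiff
        have hu₁B : u₁ ∈ B := by
          refine IHk (T.erase i₁) ?_ u₁ μ h𝒜 hwt ?_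
          · have := Finset.card_erase_lt_of_mem hi₁T
            omega
          · intro i hi
            by_cases hii : i = i₁
            · rw [hii]; exact h1
            · exact hoff i fun hiT => hi (Finset.mem_erase.2 ⟨hii, hiT⟩)
        have hs : (u - u₁) + u₁ = u := by abel
        rw [← hs]
        exact add_mem hdiff hu₁B
      -- the first derivative of u
      have hdua : f i₁ u ∈ 𝒜 (γ + μ) := (hfhom i₁).1 μ u hu𝒜
      have hduwt : f i₁ u ∈ wtSpace S (0 : Module.End F A → F) m' := by
        have h := hupowwt 1 (by omega)
        rw [pow_one] at h
        simpa using h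
      have hduB : f i₁ u ∈ B :=
        IHm m' (Nat.lt_succ_self m') Finset.univ (f i₁ u) (γ + μ) hdua hduwt
          (fun i hi => absurd (Finset.mem_univ i) hi)
      rcases eps_self hskew γ with hq | hq
      · -- ε γ γ = 1 : full Taylor correction
        have hq' : ε γ (-γ) = 1 := by rw [hqeq, hq]
        have hεj : ∀ j : ℕ, ε γ (j • (-γ)) = 1 := by
          intro j
          induction j with
          | zero => rw [zero_smul]; exact eps_zero_right hskew hmul γ
          | succ j IH => rw [succ_nsmul, hmul, IH, hq', one_mul]
        set c : ℕ → F := fun j => (-1 : F) ^ j * ((j.factorial : F))⁻¹ with hcdef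
        have hc0 : c 0 = 1 := by simp [hcdef]
        have hcrec : ∀ j : ℕ, c (j + 1) * ((j + 1 : ℕ) : F) = - c j := by
          intro j
          have h1 : ((j.factorial : F)) ≠ 0 := Nat.cast_ne_zero.2 (Nat.factorial_ne_zero j)
          have h3 : ((j : F) + 1) ≠ 0 := by
            have := Nat.cast_add_one_ne_zero (R := F) j
            simpa using this
          simp only [hcdef]
          rw [Nat.factorial_succ]
          push_cast
          field_simp
          ring
        have hdtj : ∀ j : ℕ, f i₁ (t ^ (j + 1)) = ((j + 1 : ℕ) : F) • t ^ j := by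
          intro j
          induction j with
          | zero => rw [pow_one, ht1, pow_zero]; simp
          | succ j IH =>
            rw [pow_succ' t (j + 1),
              (hfhom i₁).2 (-γ) ((j + 1) • (-γ)) t (t ^ (j + 1)) ht𝒜 (htpow𝒜 (j + 1)),
              ht1, one_mul, IH, ← hγdef, hq', one_smul, mul_smul_comm, ← pow_succ']
            push_cast
            have hrw1 : ((j : F) + 1 + 1) • t ^ (j + 1)
                = ((j : F) + 1) • t ^ (j + 1) + t ^ (j + 1) := by
              rw [add_smul, one_smul]
            rw [hrw1]
            exact add_comm _ _
        have hX : ∀ j : ℕ, f i₁ (((f i₁) ^ j) u) = ((f i₁) ^ (j + 1)) u := by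
          intro j
          rw [← Module.End.mul_apply, ← pow_succ']
        have hterm𝒜 : ∀ j : ℕ, t ^ j * (((f i₁) ^ j) u) ∈ 𝒜 μ := by
          intro j
          have h := SetLike.mul_mem_graded (htpow𝒜 j) (hupow𝒜 j)
          have he : j • (-γ) + (j • γ + μ) = μ := by
            have h1 : j • (-γ) + j • γ = 0 := by rw [← smul_add, neg_add_cancel, smul_zero]
            rw [← add_assoc, h1, zero_add]
          rwa [he] at h
        have hu₁𝒜 : (∑ j ∈ Finset.range (m' + 2), c j • (t ^ j * (((f i₁) ^ j) u))) ∈ 𝒜 μ :=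
          Submodule.sum_mem _ fun j _ => Submodule.smul_mem _ _ (hterm𝒜 j)
        have hu₁wt : (∑ j ∈ Finset.range (m' + 2), c j • (t ^ j * (((f i₁) ^ j) u)))
            ∈ wtSpace S (0 : Module.End F A → F) (m' + 1) := by
          refine Submodule.sum_mem (wtSub S (m' + 1)) fun j hj => ?_
          refine Submodule.smul_mem _ _ ?_
          have hj' : j ≤ m' + 1 := by
            have := Finset.mem_range.1 hj
            omega
          exact wt_mul hShom (m' + 1) j (m' + 1 - j) (by omega) (htpow𝒜 j) (hupow𝒜 j)
            (htpowwt j) (hupowwt j hj')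
        have hstep : ∀ j ∈ Finset.range (m' + 2), f i₁ (c j • (t ^ j * (((f i₁) ^ j) u))) =
            c j • (f i₁ (t ^ j) * (((f i₁) ^ j) u))
              + c j • (t ^ j * (((f i₁) ^ (j + 1)) u)) := by
          intro j _
          rw [map_smul, (hfhom i₁).2 (j • (-γ)) (j • γ + μ) _ _ (htpow𝒜 j) (hupow𝒜 j),
            ← hγdef, hεj j, one_smul, hX j, smul_add]
        have hfu₁ : f i₁ (∑ j ∈ Finset.range (m' + 2),
            c j • (t ^ j * (((f i₁) ^ j) u))) = 0 := by
          rw [map_sum, Finset.sum_congr rfl hstep, Finset.sum_add_distrib]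
          have hS1 : ∑ j ∈ Finset.range (m' + 2), c j • (f i₁ (t ^ j) * (((f i₁) ^ j) u))
              = ∑ j ∈ Finset.range (m' + 1),
                  (- c j) • (t ^ j * (((f i₁) ^ (j + 1)) u)) := by
            rw [Finset.sum_range_succ']
            have hzero : c 0 • (f i₁ (t ^ 0) * (((f i₁) ^ 0) u)) = 0 := by
              rw [pow_zero, der_one hskew hmul (hfhom i₁), zero_mul, smul_zero]
            rw [hzero, add_zero]
            refine Finset.sum_congr rfl fun j _ => ?_
            rw [hdtj j, smul_mul_assoc, smul_smul, hcrec j]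
          have hS2 : ∑ j ∈ Finset.range (m' + 2), c j • (t ^ j * (((f i₁) ^ (j + 1)) u))
              = ∑ j ∈ Finset.range (m' + 1), c j • (t ^ j * (((f i₁) ^ (j + 1)) u)) := by
            rw [Finset.sum_range_succ]
            have h22 : ((f i₁) ^ (m' + 1 + 1)) u = 0 := by
              have hee : m' + 1 + 1 = m' + 2 := by omega
              rw [hee]
              exact hupow_top
            rw [h22, mul_zero, smul_zero, add_zero]
          rw [hS1, hS2, ← Finset.sum_add_distrib]
          refine Finset.sum_eq_zero fun j _ => ?_
          rw [neg_smul, neg_add_cancel]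
        have hoff₁ : ∀ i ∉ T, f i (∑ j ∈ Finset.range (m' + 2),
            c j • (t ^ j * (((f i₁) ^ j) u))) = 0 := by
          intro i hi
          rw [map_sum]
          refine Finset.sum_eq_zero fun j _ => ?_
          rw [map_smul, (hfhom i).2 (j • (-γ)) (j • γ + μ) _ _ (htpow𝒜 j) (hupow𝒜 j),
            htpow_off i hi j, zero_mul, hupow_off i hi j, mul_zero, smul_zero, add_zero,
            smul_zero]
        have hdiff : u - (∑ j ∈ Finset.range (m' + 2),
            c j • (t ^ j * (((f i₁) ^ j) u))) ∈ B := by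
          have hsplit : (∑ j ∈ Finset.range (m' + 2), c j • (t ^ j * (((f i₁) ^ j) u)))
              = (∑ j ∈ Finset.range (m' + 1),
                  c (j + 1) • (t ^ (j + 1) * (((f i₁) ^ (j + 1)) u))) + u := by
            rw [Finset.sum_range_succ']
            congr 1
            rw [hc0, one_smul, pow_zero, one_mul, pow_zero, Module.End.one_apply]
          rw [hsplit]
          have hrw2 : u - ((∑ j ∈ Finset.range (m' + 1),
                c (j + 1) • (t ^ (j + 1) * (((f i₁) ^ (j + 1)) u))) + u)
              = - ∑ j ∈ Finset.range (m' + 1),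
                  c (j + 1) • (t ^ (j + 1) * (((f i₁) ^ (j + 1)) u)) := by
            abel
          rw [hrw2]
          refine neg_mem ?_
          refine sum_mem fun j hj => ?_
          refine B.smul_mem ?_ _
          refine mul_mem (pow_mem htB (j + 1)) ?_
          have hjm : j < m' + 1 := Finset.mem_range.1 hj
          have hwtj : ((f i₁) ^ (j + 1)) u
              ∈ wtSpace S (0 : Module.End F A → F) (m' + 1 - (j + 1)) :=
            hupowwt (j + 1) (by omega)
          exact IHm (m' + 1 - (j + 1)) (by omega) Finset.univ _ ((j + 1) • γ + μ)
            (hupow𝒜 (j + 1)) hwtj (fun i hi => absurd (Finset.mem_univ i) hi)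
        exact hconc _ hu₁𝒜 hu₁wt hfu₁ hoff₁ hdiff
      · -- ε γ γ = -1 : the derivation squares to zero
        have hff : f i₁ * f i₁ = 0 := by
          have h := hcij i₁ i₁
          rw [← hγdef, hq] at h
          replace h : f i₁ * f i₁ = -(f i₁ * f i₁) := h.trans (by ext x; simp)
          have h3 : (f i₁ * f i₁) + (f i₁ * f i₁) = 0 := by
            nth_rewrite 2 [h]
            exact add_neg_cancel _
          have h4 : (2 : F) • (f i₁ * f i₁) = 0 := by rw [two_smul]; exact h3
          rcases smul_eq_zero.1 h4 with h5 | h5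
          · exact absurd h5 (by norm_num)
          · exact h5
        have hffu : f i₁ (f i₁ u) = 0 := by
          have := congrArg (fun e : Module.End F A => e u) hff
          simpa [Module.End.mul_apply] using this
        have htdua : t * f i₁ u ∈ 𝒜 μ := by
          have h := SetLike.mul_mem_graded ht𝒜 hdua
          have he : -γ + (γ + μ) = μ := by abel
          rwa [he] at h
        refine hconc (u - t * f i₁ u) ?_ ?_ ?_ ?_ ?_
        · exact Submodule.sub_mem _ hu𝒜 htdua
        · refine Submodule.sub_mem (wtSub S (m' + 1)) huwt ?_
          exact wt_mul hShom (m' + 1) 1 m' (by omega) ht𝒜 hdua htwt1 hduwt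
        · rw [map_sub, (hfhom i₁).2 (-γ) (γ + μ) t (f i₁ u) ht𝒜 hdua, ht1, one_mul,
            hffu, mul_zero, smul_zero, add_zero, sub_self]
        · intro i hi
          have hfidu : f i (f i₁ u) = 0 := by
            have h := hupow_off i hi 1
            rwa [pow_one] at h
          rw [map_sub, hoffT i hi, (hfhom i).2 (-γ) (γ + μ) t (f i₁ u) ht𝒜 hdua,
            ht_off i hi, zero_mul, hfidu, mul_zero, smul_zero, add_zero, sub_self]
        · have hss : u - (u - t * f i₁ u) = t * f i₁ u := by abel
          rw [hss]
          exact mul_mem htB hduB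

end Stage5

/-- Under the hypotheses of the classification theorem (algebraically
closed `F` of characteristic zero, `D` finite-dimensional, `Γ`-graded,
`ε`-commutative, locally finite, with `Γ`-graded eigenspaces, and `A` graded
`D`-simple), the zero generalized weight space `A(0) = ∪_m A(0)^{(m)}` (taken with
respect to the set of homogeneous elements of `D`) is contained in (hence equal to)
the unital `F`-subalgebra of `A` generated by `A(0)^{(1)}`. -/
theorem zeroWeightSpace_generated_by_first_level
    {F : Type*} [Field F] [IsAlgClosed F] [CharZero F]
    {Γ : Type*} [AddCommGroup Γ] [DecidableEq Γ]
    {A : Type*} [Ring A] [Algebra F A]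
    (ε : Γ → Γ → F)
    (hskew : ∀ l m : Γ, ε l m * ε m l = 1)
    (hmul : ∀ l m n : Γ, ε l (m + n) = ε l m * ε l n)
    (𝒜 : Γ → Submodule F A) [GradedAlgebra 𝒜]
    (hcomm : ∀ (l m : Γ) (a b : A), a ∈ 𝒜 l → b ∈ 𝒜 m → a * b = ε l m • (b * a))
    (D : Submodule F (Module.End F A)) [FiniteDimensional F D]
    (hDgraded : D = Submodule.span F
      {d : Module.End F A | d ∈ D ∧ ∃ γ : Γ, IsHomColorDer ε 𝒜 γ d})
    (hDcomm : ∀ d d' : Module.End F A, d ∈ D → d' ∈ D → ∀ γ γ' : Γ,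
      IsHomColorDer ε 𝒜 γ d → IsHomColorDer ε 𝒜 γ' d' →
      d * d' = ε γ γ' • (d' * d))
    (hDlf : ∀ d ∈ D, ∀ v : A, FiniteDimensional F
      (Submodule.span F (Set.range fun n : ℕ => (d ^ n) v)))
    (hDeig : ∀ d : Module.End F A, d ∈ D → (∃ γ : Γ, IsHomColorDer ε 𝒜 γ d) →
      ∀ (c : F) (v : A), d v = c • v → ∀ γ' : Γ,
        d (DirectSum.decompose 𝒜 v γ' : A) = c • (DirectSum.decompose 𝒜 v γ' : A))
    (hsimple : IsGradedDSimple 𝒜 (D : Set (Module.End F A))) :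
    ∀ (m : ℕ) (u : A),
      u ∈ wtSpace {d : Module.End F A | d ∈ D ∧ ∃ γ : Γ, IsHomColorDer ε 𝒜 γ d}
            (0 : Module.End F A → F) m →
      u ∈ Algebra.adjoin F
            (wtSpace {d : Module.End F A | d ∈ D ∧ ∃ γ : Γ, IsHomColorDer ε 𝒜 γ d}
              (0 : Module.End F A → F) 1) := by
    classical
  intro m u hu
  have hShom : ∀ d ∈ {d : Module.End F A | d ∈ D ∧ ∃ γ : Γ, IsHomColorDer ε 𝒜 γ d},
      ∃ γ, IsHomColorDer ε 𝒜 γ d := fun d hd => hd.2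
  obtain ⟨n, f, hfS, hspan⟩ := exists_fin_span (F := F) hDgraded
  have hf' : ∀ i, ∃ γ, IsHomColorDer ε 𝒜 γ (f i) := fun i => (hfS i).2
  choose γd hγd using hf'
  rw [← DirectSum.sum_support_decompose 𝒜 u]
  refine sum_mem fun μ _ => ?_
  exact main_hom hskew hmul hcomm hDgraded hDcomm hsimple hfS hγd hspan m Finset.univ
    _ μ (SetLike.coe_mem _) (wt_proj hShom m hu μ)
    (fun i hi => absurd (Finset.mem_univ i) hi)
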